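/- Let $\Lambda = \{\lambda_n\}$ be a nondecreasing sequence of positive reals with $\sum_{n=1}^\infty 1/\lambda_n = +\infty$, and let $p(n)$ be an increasing sequence with $1 \leq p(n) \uparrow \infty$. Then there exists a continuous function $f : [0,1]^2 \to \mathbb{R}$ (extendable 1-periodically in each variable) such that $f \in BV^{\#}(p(n) \uparrow \infty)$ but $f \notin \Lambda^{\#}BV$. -/

import Mathlib

/-- A finite collection of `m` nonoverlapping open subintervals `(a i, b i)` of `[0,1]`. -/
def Nonoverlap (m : ℕ) (a b : ℕ → ℝ) : Prop :=
  (∀ i < m, 0 ≤ a i ∧ a i < b i ∧ b i ≤ 1) ∧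
  ∀ i < m, ∀ j < m, i ≠ j → Set.Ioo (a i) (b i) ∩ Set.Ioo (a j) (b j) = ∅

/-- `Λ^{#}V_1(f) ≤ M`: all Waterman-type sums in the first variable, with a separate
point `y i` for each interval, are bounded by `M`. -/
def LamSharpV1 (lam : ℕ → ℝ) (f : ℝ → ℝ → ℝ) (M : ℝ) : Prop :=
  ∀ (m : ℕ) (a b y : ℕ → ℝ), Nonoverlap m a b → (∀ i < m, y i ∈ Set.Icc (0:ℝ) 1) →
    ∑ i ∈ Finset.range m, |f (b i) (y i) - f (a i) (y i)| / lam i ≤ M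

/-- `Λ^{#}V_2(f) ≤ M`: the symmetric condition in the second variable. -/
def LamSharpV2 (lam : ℕ → ℝ) (f : ℝ → ℝ → ℝ) (M : ℝ) : Prop :=
  ∀ (m : ℕ) (a b x : ℕ → ℝ), Nonoverlap m a b → (∀ i < m, x i ∈ Set.Icc (0:ℝ) 1) →
    ∑ i ∈ Finset.range m, |f (x i) (b i) - f (x i) (a i)| / lam i ≤ M

/-- The class `Λ^{#}BV`. -/
def LamSharpBV (lam : ℕ → ℝ) (f : ℝ → ℝ → ℝ) : Prop :=
  ∃ M : ℝ, LamSharpV1 lam f M ∧ LamSharpV2 lam f M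

/-- `V_1^{#}(f, p(n) ↑ ∞) ≤ M`: for every `n`, every collection of nonoverlapping
intervals of lengths at least `2⁻ⁿ` and every choice of points `y i`, the `ℓ^{p(n)}`
sum of increments in the first variable is at most `M`. -/
def BVSharpV1 (p : ℕ → ℝ) (f : ℝ → ℝ → ℝ) (M : ℝ) : Prop :=
  ∀ (n m : ℕ) (a b y : ℕ → ℝ), Nonoverlap m a b →
    (∀ i < m, 1 / 2 ^ n ≤ b i - a i) →
    (∀ i < m, y i ∈ Set.Icc (0:ℝ) 1) →
    (∑ i ∈ Finset.range m, |f (b i) (y i) - f (a i) (y i)| ^ p n) ^ (1 / p n) ≤ M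

/-- `V_2^{#}(f, p(n) ↑ ∞) ≤ M`: the symmetric condition in the second variable. -/
def BVSharpV2 (p : ℕ → ℝ) (f : ℝ → ℝ → ℝ) (M : ℝ) : Prop :=
  ∀ (n m : ℕ) (a b x : ℕ → ℝ), Nonoverlap m a b →
    (∀ i < m, 1 / 2 ^ n ≤ b i - a i) →
    (∀ i < m, x i ∈ Set.Icc (0:ℝ) 1) →
    (∑ i ∈ Finset.range m, |f (x i) (b i) - f (x i) (a i)| ^ p n) ^ (1 / p n) ≤ M

/-- The class `BV^{#}(p(n) ↑ ∞)`. -/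
def BVSharp (p : ℕ → ℝ) (f : ℝ → ℝ → ℝ) : Prop :=
  ∃ M : ℝ, BVSharpV1 p f M ∧ BVSharpV2 p f M


open Finset


/-- distance from a real number to the nearest integer -/
noncomputable def dZ (t : ℝ) : ℝ := |t - round t|

lemma dZ_nonneg (t : ℝ) : 0 ≤ dZ t := abs_nonneg _

lemma dZ_le (t : ℝ) (z : ℤ) : dZ t ≤ |t - z| := round_le t z

lemma dZ_add_int (t : ℝ) (z : ℤ) : dZ (t + z) = dZ t := by
  unfold dZ
  rw [round_add_intCast]
  push_cast
  congr 1
  ring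

lemma continuous_dZ : Continuous dZ := by
  have key : ∀ u v : ℝ, dZ u - dZ v ≤ |u - v| := by
    intro u v
    have h1 : dZ u ≤ |u - round v| := dZ_le u (round v)
    have h2 : |u - round v| ≤ |u - v| + |v - round v| := by
      have h3 := abs_add_le (u - v) (v - (round v : ℝ))
      have h4 : u - v + (v - (round v : ℝ)) = u - round v := by ring
      rw [h4] at h3
      exact h3
    have h5 : dZ v = |v - round v| := rfl
    linarith
  have : LipschitzWith 1 dZ := by
    apply LipschitzWith.of_dist_le_mul
    intro x y
    rw [Real.dist_eq, Real.dist_eq, NNReal.coe_one, one_mul, abs_sub_le_iff]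
    refine ⟨key x y, ?_⟩
    have := key y x
    rwa [abs_sub_comm] at this
  exact this.continuous

lemma dZ_eq_abs {t : ℝ} (ht : |t| ≤ 1/2) : dZ t = |t| := by
  rcases eq_or_ne (round t) 0 with h | h
  · unfold dZ; rw [h]; norm_num
  · refine le_antisymm (by simpa using dZ_le t 0) ?_
    have h1 : (1:ℝ) ≤ |(round t : ℝ)| := by
      have := Int.one_le_abs h
      exact_mod_cast this
    have h2 : |(round t : ℝ)| - |t| ≤ |t - round t| := by
      have := abs_sub_abs_le_abs_sub (round t : ℝ) t
      rwa [abs_sub_comm] at this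
    unfold dZ
    linarith
lemma dZ_high {t : ℝ} (h1 : 1/2 < t) (h2 : t < 3/2) : dZ t = |t - 1| := by
  unfold dZ
  have : round t = 1 := by
    rw [round_eq]
    have : (⌊t + 1/2⌋ : ℤ) = 1 := by
      apply Int.floor_eq_iff.mpr
      constructor <;> push_cast <;> linarith
    exact this
  rw [this]
  norm_num

/-- periodic tent -/
noncomputable def tent (h δ c x : ℝ) : ℝ := h * max 0 (1 - dZ (x - c) / δ)
/-- straight tent -/
noncomputable def sTent (h δ c x : ℝ) : ℝ := h * max 0 (1 - |x - c| / δ)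

lemma tent_nonneg {h : ℝ} (hh : 0 ≤ h) (δ c x : ℝ) : 0 ≤ tent h δ c x :=
  mul_nonneg hh (le_max_left _ _)

lemma sTent_nonneg {h : ℝ} (hh : 0 ≤ h) (δ c x : ℝ) : 0 ≤ sTent h δ c x :=
  mul_nonneg hh (le_max_left _ _)

lemma tent_le {h δ c : ℝ} (hh : 0 ≤ h) (hδ : 0 < δ) (x : ℝ) : tent h δ c x ≤ h := by
  unfold tent
  have h1 : max 0 (1 - dZ (x - c) / δ) ≤ 1 :=
    max_le zero_le_one (by
      have := div_nonneg (dZ_nonneg (x - c)) hδ.le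
      linarith)
  nlinarith

lemma sTent_le {h δ c : ℝ} (hh : 0 ≤ h) (hδ : 0 < δ) (x : ℝ) : sTent h δ c x ≤ h := by
  unfold sTent
  have h1 : max 0 (1 - |x - c| / δ) ≤ 1 :=
    max_le zero_le_one (by
      have := div_nonneg (abs_nonneg (x - c)) hδ.le
      linarith)
  nlinarith

lemma sTent_eq_zero {h δ c x : ℝ} (hδ : 0 < δ) (hd : δ ≤ |x - c|) : sTent h δ c x = 0 := by
  unfold sTent
  have h1 : 1 - |x - c| / δ ≤ 0 := by
    rw [sub_nonpos, le_div_iff₀ hδ]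
    linarith
  rw [max_eq_left h1, mul_zero]

lemma sTent_ne_zero {h δ c x : ℝ} (hδ : 0 < δ) (hne : sTent h δ c x ≠ 0) : |x - c| < δ := by
  by_contra hcon
  push_neg at hcon
  exact hne (sTent_eq_zero hδ hcon)

lemma sTent_peak {h δ c : ℝ} (hδ : 0 < δ) : sTent h δ c c = h := by
  unfold sTent
  simp

lemma tent_eq_sTent {h δ c x : ℝ} (hh : 0 ≤ h) (hδ : 0 < δ) (hcδ : δ < c) (hc : c ≤ 1/2)
    (hx0 : 0 ≤ x) (hx1 : x ≤ 1) : tent h δ c x = sTent h δ c x := by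
  rcases le_or_gt (x - c) (1/2) with hle | hgt
  · have habs : |x - c| ≤ 1/2 := abs_le.mpr ⟨by linarith, hle⟩
    unfold tent sTent
    rw [dZ_eq_abs habs]
  · have hδc : 0 < c := lt_trans hδ hcδ
    have ht2 : x - c < 3/2 := by linarith
    have hd : dZ (x - c) = |x - c - 1| := dZ_high hgt ht2
    have h1 : |x - c - 1| = 1 - (x - c) := by
      rw [abs_of_nonpos (by linarith)]; ring
    have hdd : δ ≤ dZ (x - c) := by rw [hd, h1]; linarith
    have habs : δ ≤ |x - c| := by
      rw [abs_of_pos (by linarith : 0 < x - c)]; linarith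
    have e1 : 1 - dZ (x - c) / δ ≤ 0 := by
      rw [sub_nonpos, le_div_iff₀ hδ]; linarith
    have e2 : 1 - |x - c| / δ ≤ 0 := by
      rw [sub_nonpos, le_div_iff₀ hδ]; linarith
    unfold tent sTent
    rw [max_eq_left e1, max_eq_left e2]

lemma ioo_disj {p1 q1 p2 q2 : ℝ} (hd : Set.Ioo p1 q1 ∩ Set.Ioo p2 q2 = ∅)
    (h1 : p1 < q1) (h2 : p2 < q2) : q1 ≤ p2 ∨ q2 ≤ p1 := by
  by_contra hcon
  push_neg at hcon
  obtain ⟨hA, hB⟩ := hcon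
  have hx1 : max p1 p2 < min q1 q2 := by
    rcases max_cases p1 p2 with ⟨hm, _⟩ | ⟨hm, _⟩ <;> rcases min_cases q1 q2 with ⟨hn, _⟩ | ⟨hn, _⟩ <;>
      rw [hm, hn] <;> linarith
  set x := (max p1 p2 + min q1 q2) / 2 with hxdef
  have hmem : x ∈ Set.Ioo p1 q1 ∩ Set.Ioo p2 q2 := by
    constructor <;> constructor
    · calc p1 ≤ max p1 p2 := le_max_left _ _
        _ < x := by rw [hxdef]; linarith
    · calc x < min q1 q2 := by rw [hxdef]; linarith
        _ ≤ q1 := min_le_left _ _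
    · calc p2 ≤ max p1 p2 := le_max_right _ _
        _ < x := by rw [hxdef]; linarith
    · calc x < min q1 q2 := by rw [hxdef]; linarith
        _ ≤ q2 := min_le_right _ _
  rw [hd] at hmem
  exact hmem

lemma mono_sum_le (u : ℝ → ℝ) (hu : Monotone u) (a b : ℕ → ℝ) :
    ∀ (N : ℕ) (s : Finset ℕ) (R : ℝ), s.card ≤ N → 0 ≤ R →
    (∀ i ∈ s, 0 ≤ a i ∧ a i < b i ∧ b i ≤ R) →
    (∀ i ∈ s, ∀ j ∈ s, i ≠ j → Set.Ioo (a i) (b i) ∩ Set.Ioo (a j) (b j) = ∅) →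
    ∑ i ∈ s, (u (b i) - u (a i)) ≤ u R - u 0 := by
  intro N
  induction N with
  | zero =>
    intro s R hcard hR hab hd
    have hs : s = ∅ := card_eq_zero.mp (Nat.le_antisymm hcard (Nat.zero_le _))
    subst hs
    simp only [sum_empty]
    linarith [hu hR]
  | succ N ih =>
    intro s R hcard hR hab hd
    rcases s.eq_empty_or_nonempty with rfl | hne
    · simp only [sum_empty]
      linarith [hu hR]
    obtain ⟨i0, hi0, hmax⟩ := s.exists_max_image b hne
    have key : ∀ j ∈ s.erase i0, b j ≤ a i0 := by
      intro j hj
      have hjs := mem_of_mem_erase hj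
      have hne' := ne_of_mem_erase hj
      rcases ioo_disj (hd j hjs i0 hi0 hne') (hab j hjs).2.1 (hab i0 hi0).2.1 with h | h
      · exact h
      · exfalso
        have h1 := hmax j hjs
        have h2 := (hab j hjs).2.1
        have h3 := (hab i0 hi0).2.1
        linarith
    have hsum := ih (s.erase i0) (a i0)
      (by rw [card_erase_of_mem hi0]; omega)
      (hab i0 hi0).1
      (fun i hi => ⟨(hab i (mem_of_mem_erase hi)).1, (hab i (mem_of_mem_erase hi)).2.1, key i hi⟩)
      (fun i hi j hj hne2 => hd i (mem_of_mem_erase hi) j (mem_of_mem_erase hj) hne2)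
    rw [← Finset.add_sum_erase s _ hi0]
    have hbR : u (b i0) ≤ u R := hu (hab i0 hi0).2.2
    have hua : u 0 ≤ u (a i0) := hu (hab i0 hi0).1
    linarith

lemma tent_var (h δ c : ℝ) (h0 : 0 ≤ h) (hδ : 0 < δ) (m : ℕ) (a b : ℕ → ℝ)
    (hno : Nonoverlap m a b) :
    ∑ i ∈ Finset.range m, |sTent h δ c (b i) - sTent h δ c (a i)| ≤ 2 * h := by
  set U : ℝ → ℝ := fun x => h * min 1 (max 0 ((x - c)/δ + 1)) with hU
  set V : ℝ → ℝ := fun x => h * min 1 (max 0 ((c - x)/δ + 1)) with hV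
  have clamp_hi : ∀ s : ℝ, 1 ≤ s → min 1 (max 0 s) = 1 := fun s hs =>
    min_eq_left (le_trans hs (le_max_right 0 s))
  have clamp_mid : ∀ s : ℝ, s ≤ 1 → min 1 (max 0 s) = max 0 s := fun s hs =>
    min_eq_right (max_le zero_le_one hs)
  have hUmono : Monotone U := by
    intro x y hxy
    rw [hU]
    dsimp only
    gcongr
  have hVanti : Antitone V := by
    intro x y hxy
    rw [hV]
    dsimp only
    gcongr
  have hbound : ∀ x : ℝ, 0 ≤ U x ∧ U x ≤ h ∧ 0 ≤ V x ∧ V x ≤ h := by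
    intro x
    have k1 : (0:ℝ) ≤ min 1 (max 0 ((x - c)/δ + 1)) := le_min zero_le_one (le_max_left _ _)
    have k2 : min 1 (max 0 ((x - c)/δ + 1)) ≤ 1 := min_le_left _ _
    have k3 : (0:ℝ) ≤ min 1 (max 0 ((c - x)/δ + 1)) := le_min zero_le_one (le_max_left _ _)
    have k4 : min 1 (max 0 ((c - x)/δ + 1)) ≤ 1 := min_le_left _ _
    refine ⟨mul_nonneg h0 k1, ?_, mul_nonneg h0 k3, ?_⟩
    · calc h * min 1 (max 0 ((x - c)/δ + 1)) ≤ h * 1 := by nlinarith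
        _ = h := mul_one h
    · calc h * min 1 (max 0 ((c - x)/δ + 1)) ≤ h * 1 := by nlinarith
        _ = h := mul_one h
  have hdecomp : ∀ x, sTent h δ c x = U x + V x - h := by
    intro x
    rcases le_total x c with hxc | hxc
    · have habs : |x - c| = c - x := by rw [abs_of_nonpos (by linarith)]; ring
      have hVx : V x = h := by
        rw [hV]; dsimp only
        rw [clamp_hi _ (by linarith [div_nonneg (show (0:ℝ) ≤ c - x by linarith) hδ.le]), mul_one]
      have hUx : U x = h * max 0 ((x - c)/δ + 1) := by
        rw [hU]; dsimp only
        rw [clamp_mid _ (by linarith [div_nonpos_of_nonpos_of_nonneg (show x - c ≤ 0 by linarith) hδ.le])]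
      have harg : (x - c)/δ + 1 = 1 - (c - x)/δ := by
        field_simp
        ring
      unfold sTent
      rw [habs, hUx, hVx, harg]
      ring
    · have habs : |x - c| = x - c := abs_of_nonneg (by linarith)
      have hUx : U x = h := by
        rw [hU]; dsimp only
        rw [clamp_hi _ (by linarith [div_nonneg (show (0:ℝ) ≤ x - c by linarith) hδ.le]), mul_one]
      have hVx : V x = h * max 0 ((c - x)/δ + 1) := by
        rw [hV]; dsimp only
        rw [clamp_mid _ (by linarith [div_nonpos_of_nonpos_of_nonneg (show c - x ≤ 0 by linarith) hδ.le])]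
      have harg : (c - x)/δ + 1 = 1 - (x - c)/δ := by
        field_simp
        ring
      unfold sTent
      rw [habs, hUx, hVx, harg]
      ring
  have hptw : ∀ i ∈ range m, |sTent h δ c (b i) - sTent h δ c (a i)|
      ≤ (U (b i) - U (a i)) + ((-V (b i)) - (-V (a i))) := by
    intro i hi
    have hab := hno.1 i (mem_range.mp hi)
    have hU' : U (a i) ≤ U (b i) := hUmono hab.2.1.le
    have hV' : V (b i) ≤ V (a i) := hVanti hab.2.1.le
    rw [hdecomp (b i), hdecomp (a i)]
    have he : (U (b i) + V (b i) - h) - (U (a i) + V (a i) - h)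
        = (U (b i) - U (a i)) + (V (b i) - V (a i)) := by ring
    rw [he]
    calc |(U (b i) - U (a i)) + (V (b i) - V (a i))|
        ≤ |U (b i) - U (a i)| + |V (b i) - V (a i)| := abs_add_le _ _
      _ = (U (b i) - U (a i)) + ((-V (b i)) - (-V (a i))) := by
          rw [abs_of_nonneg (by linarith), abs_of_nonpos (by linarith)]
          ring
  have hmono2 : Monotone (fun x => -V x) := fun x y hxy => neg_le_neg (hVanti hxy)
  have hs1 := mono_sum_le U hUmono a b m (range m) 1 (by rw [card_range])
    zero_le_one
    (fun i hi => ⟨(hno.1 i (mem_range.mp hi)).1, (hno.1 i (mem_range.mp hi)).2.1,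
      (hno.1 i (mem_range.mp hi)).2.2⟩)
    (fun i hi j hj hne => hno.2 i (mem_range.mp hi) j (mem_range.mp hj) hne)
  have hs2 := mono_sum_le (fun x => -V x) hmono2 a b m (range m) 1 (by rw [card_range])
    zero_le_one
    (fun i hi => ⟨(hno.1 i (mem_range.mp hi)).1, (hno.1 i (mem_range.mp hi)).2.1,
      (hno.1 i (mem_range.mp hi)).2.2⟩)
    (fun i hi j hj hne => hno.2 i (mem_range.mp hi) j (mem_range.mp hj) hne)
  calc ∑ i ∈ range m, |sTent h δ c (b i) - sTent h δ c (a i)|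
      ≤ ∑ i ∈ range m, ((U (b i) - U (a i)) + ((-V (b i)) - (-V (a i)))) :=
        sum_le_sum hptw
    _ = (∑ i ∈ range m, (U (b i) - U (a i)))
        + (∑ i ∈ range m, ((fun x => -V x) (b i) - (fun x => -V x) (a i))) := by
        rw [← sum_add_distrib]
    _ ≤ (U 1 - U 0) + ((-V 1) - (-V 0)) := add_le_add hs1 hs2
    _ ≤ 2 * h := by
        have b1 := hbound 1
        have b0 := hbound 0
        linarith

section Blocks

/-- left endpoint of block region -/
noncomputable def qq (ℓ : ℕ) : ℝ := (2:ℝ)⁻¹ ^ (ℓ + 2)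
/-- bump height -/
noncomputable def hh (ℓ : ℕ) : ℝ := (2:ℝ)⁻¹ ^ (ℓ + 2)
/-- region width -/
noncomputable def uu (s : ℕ → ℕ) (ℓ : ℕ) : ℝ := (2:ℝ)⁻¹ ^ (max (s ℓ + 2) (ℓ + 3))
/-- tent half-width -/
noncomputable def dd (L s : ℕ → ℕ) (ℓ : ℕ) : ℝ := uu s ℓ / (2 * L ℓ)
/-- tent peaks -/
noncomputable def cc (L s : ℕ → ℕ) (ℓ k : ℕ) : ℝ := qq ℓ + uu s ℓ * (2 * k + 1) / (2 * L ℓ)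
/-- block function -/
noncomputable def BB (L s : ℕ → ℕ) (ℓ : ℕ) (x : ℝ) : ℝ :=
  ∑ k ∈ Finset.range (L ℓ), tent (hh ℓ) (dd L s ℓ) (cc L s ℓ k) x
/-- the one-dimensional function -/
noncomputable def ww (L s : ℕ → ℕ) (x : ℝ) : ℝ := ∑' ℓ, BB L s ℓ x

variable (L s : ℕ → ℕ)

lemma qq_pos (ℓ : ℕ) : 0 < qq ℓ := by unfold qq; positivity
lemma hh_pos (ℓ : ℕ) : 0 < hh ℓ := by unfold hh; positivity
lemma uu_pos (ℓ : ℕ) : 0 < uu s ℓ := by unfold uu; positivity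
lemma dd_pos (hL : 0 < L ℓ) : 0 < dd L s ℓ := by
  have : (0:ℝ) < 2 * L ℓ := by positivity
  exact div_pos (uu_pos s ℓ) this

lemma hh_antitone {ℓ ℓ' : ℕ} (h : ℓ ≤ ℓ') : hh ℓ' ≤ hh ℓ :=
  pow_le_pow_of_le_one (by norm_num) (by norm_num) (by omega)

lemma uu_le_s (ℓ : ℕ) : uu s ℓ ≤ (2:ℝ)⁻¹ ^ (s ℓ + 2) :=
  pow_le_pow_of_le_one (by norm_num) (by norm_num) (le_max_left _ _)

lemma uu_le_l (ℓ : ℕ) : uu s ℓ ≤ (2:ℝ)⁻¹ ^ (ℓ + 3) :=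
  pow_le_pow_of_le_one (by norm_num) (by norm_num) (le_max_right _ _)

lemma region_le (ℓ : ℕ) : qq ℓ + uu s ℓ ≤ (2:ℝ)⁻¹ ^ (ℓ + 1) := by
  have h1 : uu s ℓ ≤ (2:ℝ)⁻¹ ^ (ℓ + 3) := uu_le_l s ℓ
  have h2 : (2:ℝ)⁻¹ ^ (ℓ + 2) + (2:ℝ)⁻¹ ^ (ℓ + 3) ≤ (2:ℝ)⁻¹ ^ (ℓ + 1) := by
    have e : (2:ℝ)⁻¹ ^ (ℓ + 2) = (2:ℝ)⁻¹ ^ ℓ * (2:ℝ)⁻¹ ^ 2 := by rw [← pow_add]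
    have e2 : (2:ℝ)⁻¹ ^ (ℓ + 3) = (2:ℝ)⁻¹ ^ ℓ * (2:ℝ)⁻¹ ^ 3 := by rw [← pow_add]
    have e3 : (2:ℝ)⁻¹ ^ (ℓ + 1) = (2:ℝ)⁻¹ ^ ℓ * (2:ℝ)⁻¹ ^ 1 := by rw [← pow_add]
    rw [e, e2, e3]
    have : (0:ℝ) ≤ (2:ℝ)⁻¹ ^ ℓ := by positivity
    nlinarith
  unfold qq
  linarith

lemma region_half (ℓ : ℕ) : qq ℓ + uu s ℓ ≤ 1/2 := by
  have := region_le s ℓ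
  have h2 : (2:ℝ)⁻¹ ^ (ℓ + 1) ≤ (2:ℝ)⁻¹ ^ 1 :=
    pow_le_pow_of_le_one (by norm_num) (by norm_num) (by omega)
  norm_num at h2
  linarith

lemma region_ord {ℓ ℓ' : ℕ} (h : ℓ < ℓ') : qq ℓ' + uu s ℓ' ≤ qq ℓ := by
  have h1 := region_le s ℓ'
  have h2 : (2:ℝ)⁻¹ ^ (ℓ' + 1) ≤ (2:ℝ)⁻¹ ^ (ℓ + 2) :=
    pow_le_pow_of_le_one (by norm_num) (by norm_num) (by omega)
  unfold qq at h1 ⊢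
  linarith

lemma one_le_abs_cast {k k' : ℕ} (hne : k ≠ k') : (1:ℝ) ≤ |(k:ℝ) - (k':ℝ)| := by
  rcases lt_or_gt_of_ne hne with h | h
  · have hc : (k:ℝ) + 1 ≤ (k':ℝ) := by exact_mod_cast Nat.succ_le_of_lt h
    rw [abs_of_neg (by linarith)]
    linarith
  · have hc : (k':ℝ) + 1 ≤ (k:ℝ) := by exact_mod_cast Nat.succ_le_of_lt h
    rw [abs_of_pos (by linarith)]
    linarith

lemma cc_lb (hL : 0 < L ℓ) {k : ℕ} (hk : k < L ℓ) :
    qq ℓ + dd L s ℓ ≤ cc L s ℓ k := by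
  unfold cc dd
  have hpos : (0:ℝ) < 2 * L ℓ := by
    have : (0:ℝ) < L ℓ := by exact_mod_cast hL
    linarith
  have hu := (uu_pos s ℓ).le
  have hknn : (0:ℝ) ≤ (k:ℝ) := Nat.cast_nonneg k
  have h1 : uu s ℓ / (2 * (L ℓ:ℝ)) = uu s ℓ * 1 / (2 * (L ℓ:ℝ)) := by ring
  rw [h1]
  have h2 : uu s ℓ * 1 / (2 * (L ℓ:ℝ)) ≤ uu s ℓ * (2 * (k:ℝ) + 1) / (2 * (L ℓ:ℝ)) := by
    gcongr
    linarith
  linarith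

lemma cc_ub (hL : 0 < L ℓ) {k : ℕ} (hk : k < L ℓ) :
    cc L s ℓ k + dd L s ℓ ≤ qq ℓ + uu s ℓ := by
  unfold cc dd
  have hpos : (0:ℝ) < 2 * L ℓ := by
    have : (0:ℝ) < L ℓ := by exact_mod_cast hL
    linarith
  have hu := (uu_pos s ℓ).le
  have hkL : (k:ℝ) + 1 ≤ (L ℓ:ℝ) := by exact_mod_cast Nat.succ_le_of_lt hk
  have key : uu s ℓ * (2 * (k:ℝ) + 1) / (2 * (L ℓ:ℝ)) + uu s ℓ / (2 * (L ℓ:ℝ)) ≤ uu s ℓ := by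
    rw [← add_div, div_le_iff₀ hpos]
    nlinarith
  linarith

lemma cc_sep (hL : 0 < L ℓ) {k k' : ℕ} (hk : k < L ℓ) (hk' : k' < L ℓ) (hne : k ≠ k') :
    2 * dd L s ℓ ≤ |cc L s ℓ k - cc L s ℓ k'| := by
  have hpos : (0:ℝ) < 2 * L ℓ := by
    have : (0:ℝ) < L ℓ := by exact_mod_cast hL
    linarith
  have hu := (uu_pos s ℓ).le
  have e : cc L s ℓ k - cc L s ℓ k' = uu s ℓ * (2 * (k:ℝ) - 2 * (k':ℝ)) / (2 * (L ℓ:ℝ)) := by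
    unfold cc
    ring
  have habs : |2 * (k:ℝ) - 2 * (k':ℝ)| = 2 * |(k:ℝ) - (k':ℝ)| := by
    rw [show 2 * (k:ℝ) - 2 * (k':ℝ) = 2 * ((k:ℝ) - (k':ℝ)) by ring, abs_mul]
    norm_num
  have h2 : (2:ℝ) ≤ |2 * (k:ℝ) - 2 * (k':ℝ)| := by
    rw [habs]
    have := one_le_abs_cast hne
    linarith
  rw [e, abs_div, abs_of_pos hpos, abs_mul, abs_of_nonneg hu]
  rw [show 2 * dd L s ℓ = uu s ℓ * 2 / (2 * (L ℓ:ℝ)) from by unfold dd; ring]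
  gcongr

variable {L s}

lemma cc_half (hL : 0 < L ℓ) {k : ℕ} (hk : k < L ℓ) : cc L s ℓ k ≤ 1/2 := by
  have h1 := cc_ub L s hL hk
  have h2 := region_half s ℓ
  have h3 := dd_pos L s hL
  linarith

lemma dd_lt_cc (hL : 0 < L ℓ) {k : ℕ} (hk : k < L ℓ) : dd L s ℓ < cc L s ℓ k := by
  have h1 := cc_lb L s hL hk
  have h2 := qq_pos ℓ
  linarith

lemma BB_eq_sTent (hL : 0 < L ℓ) {x : ℝ} (hx0 : 0 ≤ x) (hx1 : x ≤ 1) :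
    BB L s ℓ x = ∑ k ∈ Finset.range (L ℓ), sTent (hh ℓ) (dd L s ℓ) (cc L s ℓ k) x := by
  apply Finset.sum_congr rfl
  intro k hk
  exact tent_eq_sTent (hh_pos ℓ).le (dd_pos L s hL) (dd_lt_cc hL (mem_range.mp hk))
    (cc_half hL (mem_range.mp hk)) hx0 hx1

lemma BB_nonneg (ℓ : ℕ) (x : ℝ) : 0 ≤ BB L s ℓ x :=
  Finset.sum_nonneg fun k _ => tent_nonneg (hh_pos ℓ).le _ _ _

lemma sTent_single (hL : 0 < L ℓ) {x : ℝ} {k k' : ℕ} (hk : k < L ℓ) (hk' : k' < L ℓ)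
    (hne : k ≠ k') (h1 : sTent (hh ℓ) (dd L s ℓ) (cc L s ℓ k) x ≠ 0) :
    sTent (hh ℓ) (dd L s ℓ) (cc L s ℓ k') x = 0 := by
  have hd := dd_pos L s hL
  have h2 := sTent_ne_zero hd h1
  apply sTent_eq_zero hd
  have h3 := cc_sep L s hL hk hk' hne
  have h4 : |cc L s ℓ k - cc L s ℓ k'| ≤ |x - cc L s ℓ k| + |x - cc L s ℓ k'| := by
    have := abs_sub_abs_le_abs_sub (cc L s ℓ k) (cc L s ℓ k')
    calc |cc L s ℓ k - cc L s ℓ k'| = |(cc L s ℓ k - x) + (x - cc L s ℓ k')| := by ring_nf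
      _ ≤ |cc L s ℓ k - x| + |x - cc L s ℓ k'| := abs_add_le _ _
      _ = |x - cc L s ℓ k| + |x - cc L s ℓ k'| := by rw [abs_sub_comm]
  linarith

lemma BB_le_Icc (hL : 0 < L ℓ) {x : ℝ} (hx0 : 0 ≤ x) (hx1 : x ≤ 1) :
    BB L s ℓ x ≤ hh ℓ := by
  rw [BB_eq_sTent hL hx0 hx1]
  by_cases hz : ∀ k ∈ Finset.range (L ℓ), sTent (hh ℓ) (dd L s ℓ) (cc L s ℓ k) x = 0
  · rw [Finset.sum_eq_zero hz]
    exact (hh_pos ℓ).le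
  · push_neg at hz
    obtain ⟨k0, hk0, hk0ne⟩ := hz
    rw [Finset.sum_eq_single_of_mem k0 hk0 (fun k hk hkne =>
      sTent_single hL (mem_range.mp hk0) (mem_range.mp hk) (fun hEq => hkne (hEq.symm)) hk0ne)]
    exact sTent_le (hh_pos ℓ).le (dd_pos L s hL) x

lemma BB_per (ℓ : ℕ) (x : ℝ) (z : ℤ) : BB L s ℓ (x + z) = BB L s ℓ x := by
  apply Finset.sum_congr rfl
  intro k _
  unfold tent
  rw [show x + (z:ℝ) - cc L s ℓ k = (x - cc L s ℓ k) + z by ring, dZ_add_int]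

lemma BB_le (hL : 0 < L ℓ) (x : ℝ) : BB L s ℓ x ≤ hh ℓ := by
  have h1 : BB L s ℓ x = BB L s ℓ (Int.fract x) := by
    rw [show Int.fract x = x + ((-⌊x⌋ : ℤ) : ℝ) by push_cast; rw [← Int.self_sub_floor]; ring]
    rw [← BB_per (L := L) (s := s) ℓ x (-⌊x⌋)]
  rw [h1]
  exact BB_le_Icc hL (Int.fract_nonneg x) (Int.fract_lt_one x).le

lemma BB_supp (hL : 0 < L ℓ) {x : ℝ} (hx0 : 0 ≤ x) (hx1 : x ≤ 1)
    (hne : BB L s ℓ x ≠ 0) : qq ℓ < x ∧ x < qq ℓ + uu s ℓ := by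
  rw [BB_eq_sTent hL hx0 hx1] at hne
  obtain ⟨k, hk, hkne⟩ := Finset.exists_ne_zero_of_sum_ne_zero hne
  have hd := dd_pos L s hL
  have h2 := sTent_ne_zero hd hkne
  have h3 := cc_lb L s hL (mem_range.mp hk)
  have h4 := cc_ub L s hL (mem_range.mp hk)
  rw [abs_lt] at h2
  constructor <;> linarith

lemma BB_zero_left (hL : 0 < L ℓ) {x : ℝ} (hx0 : 0 ≤ x) (hx1 : x ≤ 1)
    (hx : x ≤ qq ℓ) : BB L s ℓ x = 0 := by
  rw [BB_eq_sTent hL hx0 hx1]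
  apply Finset.sum_eq_zero
  intro k hk
  apply sTent_eq_zero (dd_pos L s hL)
  have hdp := dd_pos L s hL
  have h3 := cc_lb L s hL (mem_range.mp hk)
  rw [abs_sub_comm, abs_of_nonneg (by linarith)]
  linarith

lemma BB_zero_right (hL : 0 < L ℓ) {x : ℝ} (hx0 : 0 ≤ x) (hx1 : x ≤ 1)
    (hx : qq ℓ + uu s ℓ ≤ x) : BB L s ℓ x = 0 := by
  rw [BB_eq_sTent hL hx0 hx1]
  apply Finset.sum_eq_zero
  intro k hk
  apply sTent_eq_zero (dd_pos L s hL)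
  have hdp := dd_pos L s hL
  have h4 := cc_ub L s hL (mem_range.mp hk)
  rw [abs_of_nonneg (by linarith)]
  linarith

lemma BB_zero_other (hLa : ∀ j, 0 < L j) {ℓ ℓ' : ℕ} (hne : ℓ ≠ ℓ') {x : ℝ}
    (hx0 : 0 ≤ x) (hx1 : x ≤ 1) (hq : qq ℓ ≤ x) (hqu : x ≤ qq ℓ + uu s ℓ) :
    BB L s ℓ' x = 0 := by
  rcases lt_or_gt_of_ne hne with h | h
  · -- ℓ < ℓ' : region ℓ' is to the right? no: qq ℓ' + uu ℓ' ≤ qq ℓ ≤ x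
    exact BB_zero_right (hLa ℓ') hx0 hx1 (le_trans (region_ord s h) hq)
  · exact BB_zero_left (hLa ℓ') hx0 hx1 (le_trans hqu (region_ord s h))

lemma summable_hh : Summable hh := by
  have base : Summable (fun n : ℕ => (2:ℝ)⁻¹ ^ n * (2:ℝ)⁻¹ ^ 2) :=
    (summable_geometric_of_lt_one (by norm_num) (by norm_num)).mul_right _
  exact base.congr (fun ℓ => by unfold hh; rw [pow_add])

lemma summable_BB (hLa : ∀ j, 0 < L j) (x : ℝ) : Summable (fun ℓ => BB L s ℓ x) := by
  apply Summable.of_nonneg_of_le (fun ℓ => BB_nonneg ℓ x) (fun ℓ => BB_le (hLa ℓ) x)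
    summable_hh

lemma ww_per (hLa : ∀ j, 0 < L j) (x : ℝ) : ww L s (x + 1) = ww L s x := by
  unfold ww
  apply tsum_congr
  intro ℓ
  have := BB_per (L := L) (s := s) ℓ x (1:ℤ)
  push_cast at this
  exact this

lemma continuous_ww (hLa : ∀ j, 0 < L j) : Continuous (ww L s) := by
  apply continuous_tsum
  · intro ℓ
    apply continuous_finset_sum
    intro k _
    unfold tent
    apply Continuous.mul continuous_const
    apply Continuous.max continuous_const
    apply Continuous.sub continuous_const
    exact (continuous_dZ.comp (continuous_id.sub continuous_const)).div_const _
  · exact summable_hh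
  · intro ℓ x
    rw [Real.norm_eq_abs, abs_of_nonneg (BB_nonneg ℓ x)]
    exact BB_le (hLa ℓ) x

lemma ww_tail (hLa : ∀ j, 0 < L j) {x : ℝ} (hx0 : 0 ≤ x) (hx1 : x ≤ 1) (N : ℕ) :
    0 ≤ ∑' i, BB L s (i + N) x ∧ ∑' i, BB L s (i + N) x ≤ hh N := by
  constructor
  · exact tsum_nonneg (fun i => BB_nonneg _ x)
  · by_cases hz : ∀ i, BB L s (i + N) x = 0
    · rw [tsum_congr hz, tsum_zero]
      exact (hh_pos N).le
    · push_neg at hz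
      obtain ⟨i0, hi0⟩ := hz
      have hsupp := BB_supp (hLa (i0 + N)) hx0 hx1 hi0
      have heq : ∑' i, BB L s (i + N) x = BB L s (i0 + N) x := by
        apply tsum_eq_single
        intro i' hne
        exact BB_zero_other hLa (by omega : i0 + N ≠ i' + N) hx0 hx1 hsupp.1.le hsupp.2.le
      rw [heq]
      exact le_trans (BB_le (hLa (i0 + N)) x) (hh_antitone (by omega))

lemma ww_split (hLa : ∀ j, 0 < L j) {x : ℝ} (hx0 : 0 ≤ x) (hx1 : x ≤ 1) (N : ℕ) :
    ww L s x = ∑ ℓ ∈ Finset.range N, BB L s ℓ x + ∑' i, BB L s (i + N) x := by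
  unfold ww
  exact (Summable.sum_add_tsum_nat_add N (summable_BB hLa x)).symm

lemma ww_nonneg (hLa : ∀ j, 0 < L j) (x : ℝ) : 0 ≤ ww L s x :=
  tsum_nonneg (fun ℓ => BB_nonneg ℓ x)

lemma ww_peak (hLa : ∀ j, 0 < L j) {ℓ k : ℕ} (hk : k < L ℓ) :
    ww L s (cc L s ℓ k) = hh ℓ := by
  have hL := hLa ℓ
  have hlb := cc_lb L s hL hk
  have hub := cc_ub L s hL hk
  have hdp := dd_pos L s hL
  have hq := qq_pos ℓ
  have hc0 : (0:ℝ) ≤ cc L s ℓ k := by linarith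
  have hc1 : cc L s ℓ k ≤ 1 := by
    have := region_half s ℓ
    linarith
  unfold ww
  rw [tsum_eq_single ℓ (fun ℓ' hne => BB_zero_other hLa (fun h => hne h.symm) hc0 hc1
    (by linarith) (by linarith))]
  rw [BB_eq_sTent hL hc0 hc1]
  rw [Finset.sum_eq_single_of_mem k (mem_range.mpr hk) (fun k' hk' hne => by
    apply sTent_eq_zero hdp
    have := cc_sep L s hL hk (mem_range.mp hk') (fun h => hne h.symm)
    linarith)]
  exact sTent_peak hdp

lemma ww_foot (hLa : ∀ j, 0 < L j) {ℓ k : ℕ} (hk : k < L ℓ) :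
    ww L s (cc L s ℓ k - dd L s ℓ) = 0 := by
  have hL := hLa ℓ
  have hlb := cc_lb L s hL hk
  have hub := cc_ub L s hL hk
  have hdp := dd_pos L s hL
  have hq := qq_pos ℓ
  set x := cc L s ℓ k - dd L s ℓ with hx
  have hc0 : (0:ℝ) ≤ x := by rw [hx]; linarith
  have hc1 : x ≤ 1 := by
    have := region_half s ℓ
    rw [hx]; linarith
  unfold ww
  have hall : ∀ ℓ', BB L s ℓ' x = 0 := by
    intro ℓ'
    rcases eq_or_ne ℓ' ℓ with heq | hne
    · rw [heq]
      rw [BB_eq_sTent hL hc0 hc1]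
      apply Finset.sum_eq_zero
      intro k' hk'
      apply sTent_eq_zero hdp
      rcases eq_or_ne k' k with rfl | hne'
      · rw [hx, abs_sub_comm, abs_of_nonneg (by linarith)]
        linarith
      · have hsep := cc_sep L s hL hk (mem_range.mp hk') (fun h => hne' h.symm)
        have h4 : |cc L s ℓ k - cc L s ℓ k'| ≤ dd L s ℓ + |x - cc L s ℓ k'| := by
          calc |cc L s ℓ k - cc L s ℓ k'| = |(cc L s ℓ k - x) + (x - cc L s ℓ k')| := by
                rw [hx]; ring_nf
            _ ≤ |cc L s ℓ k - x| + |x - cc L s ℓ k'| := abs_add_le _ _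
            _ = dd L s ℓ + |x - cc L s ℓ k'| := by
                rw [hx, show cc L s ℓ k - (cc L s ℓ k - dd L s ℓ) = dd L s ℓ by ring,
                  abs_of_nonneg hdp.le]
        linarith
    · exact BB_zero_other hLa (fun h => hne h.symm) hc0 hc1 (by rw [hx]; linarith)
        (by rw [hx]; linarith)
  rw [tsum_congr hall, tsum_zero]

lemma abs_diff_le_cap {X Y cap : ℝ} (hX0 : 0 ≤ X) (hX : X ≤ cap) (hY0 : 0 ≤ Y) (hY : Y ≤ cap) :
    |X - Y| ≤ cap := by
  rw [abs_sub_le_iff]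
  constructor <;> linarith

lemma sep_a {m : ℕ} {a b : ℕ → ℝ} (hno : Nonoverlap m a b) {e : ℝ}
    (hlen : ∀ i < m, e ≤ b i - a i) {i j : ℕ} (hi : i < m) (hj : j < m) (hne : i ≠ j) :
    e ≤ |a i - a j| := by
  rcases le_total (a i) (a j) with h | h
  · rcases ioo_disj (hno.2 i hi j hj hne) (hno.1 i hi).2.1 (hno.1 j hj).2.1 with hc | hc
    · rw [abs_of_nonpos (by linarith)]
      have := hlen i hi
      linarith
    · have h1 := (hno.1 j hj).2.1
      have := hlen i hi
      linarith
  · rcases ioo_disj (hno.2 i hi j hj hne) (hno.1 i hi).2.1 (hno.1 j hj).2.1 with hc | hc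
    · have h1 := (hno.1 i hi).2.1
      have := hlen j hj
      linarith
    · rw [abs_of_nonneg (by linarith)]
      have := hlen j hj
      linarith

lemma sep_b {m : ℕ} {a b : ℕ → ℝ} (hno : Nonoverlap m a b) {e : ℝ}
    (hlen : ∀ i < m, e ≤ b i - a i) {i j : ℕ} (hi : i < m) (hj : j < m) (hne : i ≠ j) :
    e ≤ |b i - b j| := by
  rcases le_total (b i) (b j) with h | h
  · rcases ioo_disj (hno.2 i hi j hj hne) (hno.1 i hi).2.1 (hno.1 j hj).2.1 with hc | hc
    · rw [abs_of_nonpos (by linarith)]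
      have := hlen j hj
      linarith
    · have h1 := (hno.1 i hi).2.1
      have h2 := (hno.1 j hj).2.1
      linarith
  · rcases ioo_disj (hno.2 i hi j hj hne) (hno.1 i hi).2.1 (hno.1 j hj).2.1 with hc | hc
    · have h1 := (hno.1 i hi).2.1
      have h2 := (hno.1 j hj).2.1
      rw [abs_of_nonneg (by linarith)]
      have := hlen i hi
      linarith
    · rw [abs_of_nonneg (by linarith)]
      have := hlen i hi
      linarith

/-- iterated Minkowski inequality -/
lemma lp_sum_le (m : ℕ) (P : ℝ) (hP : 1 ≤ P) (F : Finset ℕ) (g : ℕ → ℕ → ℝ)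
    (hg : ∀ ℓ i, 0 ≤ g ℓ i) :
    (∑ i ∈ Finset.range m, (∑ ℓ ∈ F, g ℓ i) ^ P) ^ (1/P)
      ≤ ∑ ℓ ∈ F, (∑ i ∈ Finset.range m, g ℓ i ^ P) ^ (1/P) := by
  have hP0 : P ≠ 0 := by linarith
  induction F using Finset.induction with
  | empty =>
    simp only [Finset.sum_empty]
    rw [show ∑ i ∈ Finset.range m, (0:ℝ) ^ P = 0 from
      Finset.sum_eq_zero (fun i _ => Real.zero_rpow hP0)]
    rw [Real.zero_rpow (by positivity)]
  | insert ℓ0 F' hnot ih =>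
    rw [Finset.sum_insert hnot]
    have step : (∑ i ∈ Finset.range m, (g ℓ0 i + ∑ ℓ ∈ F', g ℓ i) ^ P) ^ (1/P)
        ≤ (∑ i ∈ Finset.range m, g ℓ0 i ^ P) ^ (1/P)
          + (∑ i ∈ Finset.range m, (∑ ℓ ∈ F', g ℓ i) ^ P) ^ (1/P) := by
      have hmk := Real.Lp_add_le (Finset.range m) (fun i => g ℓ0 i) (fun i => ∑ ℓ ∈ F', g ℓ i) hP
      have e1 : ∀ i : ℕ, |g ℓ0 i + ∑ ℓ ∈ F', g ℓ i| = g ℓ0 i + ∑ ℓ ∈ F', g ℓ i := fun i =>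
        abs_of_nonneg (add_nonneg (hg ℓ0 i) (Finset.sum_nonneg fun ℓ _ => hg ℓ i))
      have e2 : ∀ i : ℕ, |g ℓ0 i| = g ℓ0 i := fun i => abs_of_nonneg (hg ℓ0 i)
      have e3 : ∀ i : ℕ, |∑ ℓ ∈ F', g ℓ i| = ∑ ℓ ∈ F', g ℓ i := fun i =>
        abs_of_nonneg (Finset.sum_nonneg fun ℓ _ => hg ℓ i)
      simp only [e1, e2, e3] at hmk
      exact hmk
    calc (∑ i ∈ Finset.range m, (∑ ℓ ∈ insert ℓ0 F', g ℓ i) ^ P) ^ (1/P)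
        = (∑ i ∈ Finset.range m, (g ℓ0 i + ∑ ℓ ∈ F', g ℓ i) ^ P) ^ (1/P) := by
          congr 1
          apply Finset.sum_congr rfl
          intro i _
          rw [Finset.sum_insert hnot]
      _ ≤ (∑ i ∈ Finset.range m, g ℓ0 i ^ P) ^ (1/P)
          + (∑ i ∈ Finset.range m, (∑ ℓ ∈ F', g ℓ i) ^ P) ^ (1/P) := step
      _ ≤ (∑ i ∈ Finset.range m, g ℓ0 i ^ P) ^ (1/P)
          + ∑ ℓ ∈ F', (∑ i ∈ Finset.range m, g ℓ i ^ P) ^ (1/P) := by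
          exact add_le_add_right ih _

lemma rpow_self_le {d cap P : ℝ} (hd0 : 0 ≤ d) (hd : d ≤ cap) (hP : 1 ≤ P) :
    d ^ P ≤ cap ^ (P - 1) * d := by
  rcases eq_or_lt_of_le hd0 with h0 | h0
  · rw [← h0, Real.zero_rpow (by linarith), mul_zero]
  · have hcap : 0 < cap := lt_of_lt_of_le h0 hd
    calc d ^ P = d ^ (P - 1 + 1) := by rw [sub_add_cancel]
      _ = d ^ (P - 1) * d ^ (1:ℝ) := Real.rpow_add h0 _ _
      _ = d ^ (P - 1) * d := by rw [Real.rpow_one]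
      _ ≤ cap ^ (P - 1) * d := by
          apply mul_le_mul_of_nonneg_right _ hd0
          exact Real.rpow_le_rpow hd0 hd (by linarith)

lemma rpow_extract {c hcap P : ℝ} (hc : 0 ≤ c) (hh0 : 0 ≤ hcap) (hP : 1 ≤ P) :
    (c * hcap ^ P) ^ (1/P) = c ^ (1/P) * hcap := by
  have hP0 : P ≠ 0 := by linarith
  rw [Real.mul_rpow hc (Real.rpow_nonneg hh0 _)]
  congr 1
  rw [← Real.rpow_mul hh0, mul_one_div_cancel hP0, Real.rpow_one]

lemma two_rpow_inv_le {P : ℝ} (hP : 1 ≤ P) : (2:ℝ) ^ (1/P) ≤ 2 := by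
  have h1 : (2:ℝ) ^ (1/P) ≤ (2:ℝ) ^ (1:ℝ) := by
    apply Real.rpow_le_rpow_of_exponent_le one_le_two
    rw [div_le_one (by linarith)]
    linarith
  rwa [Real.rpow_one] at h1

lemma uu_lt_len {n ℓ : ℕ} (hn : n < s ℓ) : uu s ℓ < 1/(2:ℝ)^n := by
  have h1 := uu_le_s s ℓ
  have h2 : (2:ℝ)⁻¹ ^ (s ℓ + 2) ≤ (2:ℝ)⁻¹ ^ (n + 1) :=
    pow_le_pow_of_le_one (by norm_num) (by norm_num) (by omega)
  have h3 : (2:ℝ)⁻¹ ^ (n + 1) < (2:ℝ)⁻¹ ^ n := by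
    rw [pow_succ]
    have : (0:ℝ) < (2:ℝ)⁻¹ ^ n := by positivity
    nlinarith
  have h4 : (2:ℝ)⁻¹ ^ n = 1/(2:ℝ)^n := by
    rw [inv_pow]
    exact inv_eq_one_div _
  linarith [h4 ▸ h3]

lemma block_small (hLa : ∀ j, 0 < L j) {ℓ n m : ℕ} (hn : n < s ℓ) (a b : ℕ → ℝ)
    (hno : Nonoverlap m a b) (hlen : ∀ i < m, 1/(2:ℝ)^n ≤ b i - a i) {P : ℝ} (hP : 1 ≤ P) :
    ∑ i ∈ Finset.range m, |BB L s ℓ (b i) - BB L s ℓ (a i)| ^ P ≤ 2 * hh ℓ ^ P := by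
  classical
  have hP0 : P ≠ 0 := by linarith
  set d : ℕ → ℝ := fun i => |BB L s ℓ (b i) - BB L s ℓ (a i)| with hd
  have hd_nonneg : ∀ i, 0 ≤ d i := fun i => abs_nonneg _
  have hd_le : ∀ i < m, d i ≤ hh ℓ := by
    intro i hi
    have hab := hno.1 i hi
    exact abs_diff_le_cap (BB_nonneg ℓ _) (BB_le_Icc (hLa ℓ) (by linarith) hab.2.2)
      (BB_nonneg ℓ _) (BB_le_Icc (hLa ℓ) hab.1 (by linarith))
  set S := (Finset.range m).filter (fun i => d i ≠ 0) with hS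
  have hmem : ∀ i ∈ S, (a i ∈ Set.Ioo (qq ℓ) (qq ℓ + uu s ℓ))
      ∨ (b i ∈ Set.Ioo (qq ℓ) (qq ℓ + uu s ℓ)) := by
    intro i hi
    rw [hS, Finset.mem_filter] at hi
    obtain ⟨hir, hine⟩ := hi
    have hirm := Finset.mem_range.mp hir
    have hab := hno.1 i hirm
    by_contra hcon
    push_neg at hcon
    have ha0 : BB L s ℓ (a i) = 0 := by
      by_contra hb
      exact hcon.1 (Set.mem_Ioo.mpr (BB_supp (hLa ℓ) hab.1 (by linarith) hb))
    have hb0 : BB L s ℓ (b i) = 0 := by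
      by_contra hb
      exact hcon.2 (Set.mem_Ioo.mpr (BB_supp (hLa ℓ) (by linarith) hab.2.2 hb))
    apply hine
    rw [hd]
    simp [ha0, hb0]
  have hcard : S.card ≤ 2 := by
    have hinj : Set.InjOn (fun i => decide (a i ∈ Set.Ioo (qq ℓ) (qq ℓ + uu s ℓ))) S := by
      intro i hi j hj heq
      simp only at heq
      by_contra hne
      have him := Finset.mem_range.mp (Finset.mem_filter.mp (Finset.mem_coe.mp hi)).1
      have hjm := Finset.mem_range.mp (Finset.mem_filter.mp (Finset.mem_coe.mp hj)).1
      have hult := uu_lt_len (s := s) hn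
      by_cases hcase : a i ∈ Set.Ioo (qq ℓ) (qq ℓ + uu s ℓ)
      · have hcase' : a j ∈ Set.Ioo (qq ℓ) (qq ℓ + uu s ℓ) := by
          have : decide (a j ∈ Set.Ioo (qq ℓ) (qq ℓ + uu s ℓ)) = true := by
            rw [← heq]
            exact decide_eq_true hcase
          exact of_decide_eq_true this
        have hsep := sep_a hno hlen him hjm hne
        rw [Set.mem_Ioo] at hcase hcase'
        have : |a i - a j| < uu s ℓ := by
          rw [abs_lt]
          constructor <;> linarith
        linarith
      · have hcase' : a j ∉ Set.Ioo (qq ℓ) (qq ℓ + uu s ℓ) := by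
          intro hmem'
          apply hcase
          have : decide (a j ∈ Set.Ioo (qq ℓ) (qq ℓ + uu s ℓ)) = true := decide_eq_true hmem'
          rw [← heq] at this
          exact of_decide_eq_true this
        have hbi := (hmem i (Finset.mem_coe.mp hi)).resolve_left hcase
        have hbj := (hmem j (Finset.mem_coe.mp hj)).resolve_left hcase'
        have hsep := sep_b hno hlen him hjm hne
        rw [Set.mem_Ioo] at hbi hbj
        have : |b i - b j| < uu s ℓ := by
          rw [abs_lt]
          constructor <;> linarith
        linarith
    have := Finset.card_le_card_of_injOn _ (fun i _ => Finset.mem_univ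
      (decide (a i ∈ Set.Ioo (qq ℓ) (qq ℓ + uu s ℓ)))) hinj
    simpa using this
  have hsum_eq : ∑ i ∈ Finset.range m, d i ^ P = ∑ i ∈ S, d i ^ P := by
    symm
    apply Finset.sum_subset (Finset.filter_subset _ _)
    intro i hir his
    rw [Finset.mem_filter] at his
    push_neg at his
    rw [his hir, Real.zero_rpow hP0]
  rw [hsum_eq]
  calc ∑ i ∈ S, d i ^ P ≤ S.card • (hh ℓ ^ P) := by
        apply Finset.sum_le_card_nsmul
        intro i hi
        have him := Finset.mem_range.mp (Finset.mem_filter.mp hi).1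
        exact Real.rpow_le_rpow (hd_nonneg i) (hd_le i him) (by linarith)
    _ = (S.card : ℝ) * hh ℓ ^ P := by rw [nsmul_eq_mul]
    _ ≤ 2 * hh ℓ ^ P := by
        apply mul_le_mul_of_nonneg_right _ (Real.rpow_nonneg (hh_pos ℓ).le _)
        exact_mod_cast hcard

lemma block_large (hLa : ∀ j, 0 < L j) {ℓ m : ℕ} (a b : ℕ → ℝ)
    (hno : Nonoverlap m a b) {P : ℝ} (hP : 1 ≤ P) :
    ∑ i ∈ Finset.range m, |BB L s ℓ (b i) - BB L s ℓ (a i)| ^ P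
      ≤ 2 * (L ℓ : ℝ) * hh ℓ ^ P := by
  set d : ℕ → ℝ := fun i => |BB L s ℓ (b i) - BB L s ℓ (a i)| with hd
  have hd_nonneg : ∀ i, 0 ≤ d i := fun i => abs_nonneg _
  have hd_le : ∀ i < m, d i ≤ hh ℓ := by
    intro i hi
    have hab := hno.1 i hi
    exact abs_diff_le_cap (BB_nonneg ℓ _) (BB_le_Icc (hLa ℓ) (by linarith) hab.2.2)
      (BB_nonneg ℓ _) (BB_le_Icc (hLa ℓ) hab.1 (by linarith))
  have hvar : ∑ i ∈ Finset.range m, d i ≤ 2 * hh ℓ * L ℓ := by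
    have hptw : ∀ i ∈ Finset.range m, d i ≤ ∑ k ∈ Finset.range (L ℓ),
        |sTent (hh ℓ) (dd L s ℓ) (cc L s ℓ k) (b i) - sTent (hh ℓ) (dd L s ℓ) (cc L s ℓ k) (a i)| := by
      intro i hi
      have him := Finset.mem_range.mp hi
      have hab := hno.1 i him
      rw [hd]
      simp only []
      rw [BB_eq_sTent (hLa ℓ) (by linarith : (0:ℝ) ≤ b i) hab.2.2,
        BB_eq_sTent (hLa ℓ) hab.1 (by linarith : a i ≤ 1), ← Finset.sum_sub_distrib]
      exact Finset.abs_sum_le_sum_abs _ _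
    calc ∑ i ∈ Finset.range m, d i
        ≤ ∑ i ∈ Finset.range m, ∑ k ∈ Finset.range (L ℓ),
          |sTent (hh ℓ) (dd L s ℓ) (cc L s ℓ k) (b i) - sTent (hh ℓ) (dd L s ℓ) (cc L s ℓ k) (a i)| :=
          Finset.sum_le_sum hptw
      _ = ∑ k ∈ Finset.range (L ℓ), ∑ i ∈ Finset.range m,
          |sTent (hh ℓ) (dd L s ℓ) (cc L s ℓ k) (b i) - sTent (hh ℓ) (dd L s ℓ) (cc L s ℓ k) (a i)| :=
          Finset.sum_comm
      _ ≤ ∑ k ∈ Finset.range (L ℓ), 2 * hh ℓ := by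
          apply Finset.sum_le_sum
          intro k _
          exact tent_var (hh ℓ) (dd L s ℓ) (cc L s ℓ k) (hh_pos ℓ).le (dd_pos L s (hLa ℓ)) m a b hno
      _ = 2 * hh ℓ * L ℓ := by
          rw [Finset.sum_const, Finset.card_range, nsmul_eq_mul]
          ring
  calc ∑ i ∈ Finset.range m, d i ^ P
      ≤ ∑ i ∈ Finset.range m, hh ℓ ^ (P - 1) * d i := by
        apply Finset.sum_le_sum
        intro i hi
        exact rpow_self_le (hd_nonneg i) (hd_le i (Finset.mem_range.mp hi)) hP
    _ = hh ℓ ^ (P - 1) * ∑ i ∈ Finset.range m, d i := by rw [Finset.mul_sum]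
    _ ≤ hh ℓ ^ (P - 1) * (2 * hh ℓ * L ℓ) := by
        apply mul_le_mul_of_nonneg_left hvar (Real.rpow_nonneg (hh_pos ℓ).le _)
    _ = 2 * (L ℓ : ℝ) * (hh ℓ ^ (P - 1) * hh ℓ) := by ring
    _ = 2 * (L ℓ : ℝ) * hh ℓ ^ P := by
        have he : hh ℓ ^ (P - 1) * hh ℓ = hh ℓ ^ P := by
          nth_rewrite 2 [← Real.rpow_one (hh ℓ)]
          rw [← Real.rpow_add (hh_pos ℓ)]
          norm_num
        rw [he]

lemma block_bound (hLa : ∀ j, 0 < L j) {ℓ n m : ℕ} (a b : ℕ → ℝ) (hno : Nonoverlap m a b)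
    (hlen : ∀ i < m, 1/(2:ℝ)^n ≤ b i - a i) {P : ℝ} (hP : 1 ≤ P)
    (hlarge : s ℓ ≤ n → 2 * (L ℓ : ℝ) ≤ (2:ℝ) ^ P) :
    (∑ i ∈ Finset.range m, |BB L s ℓ (b i) - BB L s ℓ (a i)| ^ P) ^ (1/P) ≤ 2 * hh ℓ := by
  have hP0 : P ≠ 0 := by linarith
  have hhnn := (hh_pos ℓ).le
  rcases lt_or_ge n (s ℓ) with hcase | hcase
  · have h1 := block_small hLa hcase a b hno hlen hP
    have h2 : (∑ i ∈ Finset.range m, |BB L s ℓ (b i) - BB L s ℓ (a i)| ^ P) ^ (1/P)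
        ≤ (2 * hh ℓ ^ P) ^ (1/P) := by
      apply Real.rpow_le_rpow _ h1 (by positivity)
      exact Finset.sum_nonneg fun i _ => Real.rpow_nonneg (abs_nonneg _) _
    rw [rpow_extract (by norm_num) hhnn hP] at h2
    calc (∑ i ∈ Finset.range m, |BB L s ℓ (b i) - BB L s ℓ (a i)| ^ P) ^ (1/P)
        ≤ (2:ℝ) ^ (1/P) * hh ℓ := h2
      _ ≤ 2 * hh ℓ := mul_le_mul_of_nonneg_right (two_rpow_inv_le hP) hhnn
  · have h1 := block_large (s := s) (ℓ := ℓ) hLa a b hno (P := P) hP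
    have h2 : (∑ i ∈ Finset.range m, |BB L s ℓ (b i) - BB L s ℓ (a i)| ^ P) ^ (1/P)
        ≤ (2 * (L ℓ : ℝ) * hh ℓ ^ P) ^ (1/P) := by
      apply Real.rpow_le_rpow _ h1 (by positivity)
      exact Finset.sum_nonneg fun i _ => Real.rpow_nonneg (abs_nonneg _) _
    rw [rpow_extract (by positivity) hhnn hP] at h2
    have h3 : (2 * (L ℓ : ℝ)) ^ (1/P) ≤ 2 := by
      have h4 : (2 * (L ℓ : ℝ)) ^ (1/P) ≤ ((2:ℝ) ^ P) ^ (1/P) :=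
        Real.rpow_le_rpow (by positivity) (hlarge hcase) (by positivity)
      rwa [← Real.rpow_mul (by norm_num : (0:ℝ) ≤ 2), mul_one_div_cancel hP0,
        Real.rpow_one] at h4
    calc (∑ i ∈ Finset.range m, |BB L s ℓ (b i) - BB L s ℓ (a i)| ^ P) ^ (1/P)
        ≤ (2 * (L ℓ : ℝ)) ^ (1/P) * hh ℓ := h2
      _ ≤ 2 * hh ℓ := mul_le_mul_of_nonneg_right h3 hhnn

lemma sum_two_hh_le (m : ℕ) : ∑ ℓ ∈ Finset.range m, 2 * hh ℓ ≤ 1 := by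
  have key : ∀ M : ℕ, ∑ ℓ ∈ Finset.range M, 2 * hh ℓ = 1 - (2:ℝ)⁻¹ ^ M := by
    intro M
    induction M with
    | zero => simp
    | succ M ih =>
      rw [Finset.sum_range_succ, ih]
      unfold hh
      rw [pow_succ, pow_succ]
      ring
  rw [key m]
  have : (0:ℝ) < (2:ℝ)⁻¹ ^ m := by positivity
  linarith

lemma tail_term_le {m : ℕ} {P : ℝ} (hP : 1 ≤ P) :
    (m : ℝ) * (2 * hh m) ^ P ≤ 1 := by
  have he : 2 * hh m = (2:ℝ)⁻¹ ^ (m + 1) := by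
    unfold hh
    rw [pow_succ]
    ring
  have h0 : (0:ℝ) < 2 * hh m := by
    have := hh_pos m
    linarith
  have h1 : 2 * hh m ≤ 1 := by
    rw [he]
    calc (2:ℝ)⁻¹ ^ (m + 1) ≤ (2:ℝ)⁻¹ ^ 0 :=
          pow_le_pow_of_le_one (by norm_num) (by norm_num) (by omega)
      _ = 1 := pow_zero _
  have h2 : (2 * hh m) ^ P ≤ (2 * hh m) ^ (1:ℝ) :=
    Real.rpow_le_rpow_of_exponent_ge h0 h1 hP
  rw [Real.rpow_one] at h2
  have h3 : (m : ℝ) * (2 * hh m) ≤ 1 := by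
    rw [he, inv_pow, ← one_div]
    rw [mul_one_div, div_le_one (by positivity)]
    have : m < 2 ^ (m + 1) := lt_of_lt_of_le (Nat.lt_two_pow_self (n := m))
      (Nat.pow_le_pow_right (by norm_num) (by omega))
    exact_mod_cast this.le
  have hm0 : (0:ℝ) ≤ (m:ℝ) := Nat.cast_nonneg m
  nlinarith


/-- Theorem 2: if `∑ 1/λ_n = ∞`, there is a continuous function,
1-periodic in each variable, belonging to `BV^{#}(p(n) ↑ ∞)` but not to `Λ^{#}BV`. -/
theorem exists_continuous_bvSharp_not_lamSharpBV
    (lam : ℕ → ℝ) (hmono : Monotone lam) (hpos : ∀ n, 0 < lam n)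
    (hdiv : Filter.Tendsto (fun m => ∑ j ∈ Finset.range m, 1 / lam j)
      Filter.atTop Filter.atTop)
    (p : ℕ → ℝ) (hp1 : ∀ n, 1 ≤ p n) (hpmono : Monotone p)
    (hptop : Filter.Tendsto p Filter.atTop Filter.atTop) :
    ∃ f : ℝ → ℝ → ℝ,
      (∀ x y : ℝ, f (x + 1) y = f x y ∧ f x (y + 1) = f x y) ∧
      Continuous (fun q : ℝ × ℝ => f q.1 q.2) ∧
      BVSharp p f ∧ ¬ LamSharpBV lam f := by
  classical
  have hLex : ∀ ℓ : ℕ, ∃ m : ℕ, ((ℓ:ℝ)+1)/hh ℓ ≤ ∑ j ∈ Finset.range m, 1/lam j :=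
    fun ℓ => (hdiv.eventually_ge_atTop _).exists
  choose L hLspec using hLex
  have hLa : ∀ j, 0 < L j := by
    intro j
    rcases Nat.eq_zero_or_pos (L j) with h0 | h
    · exfalso
      have hs := hLspec j
      rw [h0] at hs
      simp only [Finset.range_zero, Finset.sum_empty] at hs
      have : (0:ℝ) < ((j:ℝ)+1)/hh j := by
        apply div_pos _ (hh_pos j)
        positivity
      linarith
    · exact h
  have hsex : ∀ ℓ : ℕ, ∃ t : ℕ, (L ℓ : ℝ) + 1 ≤ p t :=
    fun ℓ => (hptop.eventually_ge_atTop _).exists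
  choose s hsspec using hsex
  refine ⟨fun x _ => ww L s x, ?_, ?_, ?_, ?_⟩
  · intro x y
    exact ⟨ww_per hLa x, rfl⟩
  · exact (continuous_ww hLa).comp continuous_fst
  · refine ⟨2, ?_, ?_⟩
    · -- BVSharpV1
      intro n m a b y hno hlen hy
      set P := p n with hPdef
      have hP : 1 ≤ P := hp1 n
      have hP0 : P ≠ 0 := by linarith
      have hPpos : 0 < P := by linarith
      set g : ℕ → ℕ → ℝ := fun ℓ i =>
        if ℓ < m then |BB L s ℓ (b i) - BB L s ℓ (a i)| else 2 * hh m with hgdef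
      have hg : ∀ ℓ i, 0 ≤ g ℓ i := by
        intro ℓ i
        rw [hgdef]
        dsimp only
        split
        · exact abs_nonneg _
        · have := hh_pos m
          linarith
      have key : ∀ i ∈ Finset.range m,
          |ww L s (b i) - ww L s (a i)| ≤ ∑ ℓ ∈ Finset.range (m+1), g ℓ i := by
        intro i hi
        have him := Finset.mem_range.mp hi
        have hab := hno.1 i him
        have hb0 : (0:ℝ) ≤ b i := by linarith [hab.1, hab.2.1]
        have ha1 : a i ≤ 1 := by linarith [hab.2.1, hab.2.2]
        have hsb := ww_split (s := s) hLa hb0 hab.2.2 m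
        have hsa := ww_split (s := s) hLa hab.1 ha1 m
        have hTb := ww_tail (s := s) hLa hb0 hab.2.2 m
        have hTa := ww_tail (s := s) hLa hab.1 ha1 m
        have e1 : ww L s (b i) - ww L s (a i)
            = (∑ ℓ ∈ Finset.range m, (BB L s ℓ (b i) - BB L s ℓ (a i)))
              + ((∑' j, BB L s (j + m) (b i)) - (∑' j, BB L s (j + m) (a i))) := by
          rw [hsb, hsa, Finset.sum_sub_distrib]
          ring
        calc |ww L s (b i) - ww L s (a i)|
            ≤ |∑ ℓ ∈ Finset.range m, (BB L s ℓ (b i) - BB L s ℓ (a i))|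
              + |(∑' j, BB L s (j + m) (b i)) - (∑' j, BB L s (j + m) (a i))| := by
              rw [e1]; exact abs_add_le _ _
          _ ≤ (∑ ℓ ∈ Finset.range m, |BB L s ℓ (b i) - BB L s ℓ (a i)|) + hh m :=
              add_le_add (Finset.abs_sum_le_sum_abs _ _)
                (abs_diff_le_cap hTb.1 hTb.2 hTa.1 hTa.2)
          _ ≤ ∑ ℓ ∈ Finset.range (m+1), g ℓ i := by
              rw [Finset.sum_range_succ]
              have e2 : ∑ ℓ ∈ Finset.range m, g ℓ i
                  = ∑ ℓ ∈ Finset.range m, |BB L s ℓ (b i) - BB L s ℓ (a i)| := by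
                apply Finset.sum_congr rfl
                intro ℓ hl
                rw [hgdef]
                dsimp only
                rw [if_pos (Finset.mem_range.mp hl)]
              have e3 : g m i = 2 * hh m := by
                rw [hgdef]
                dsimp only
                rw [if_neg (lt_irrefl m)]
              rw [e2, e3]
              have := hh_pos m
              linarith
      have main : (∑ i ∈ Finset.range m, |ww L s (b i) - ww L s (a i)| ^ P) ^ (1/P) ≤ 2 := by
        have step1 : (∑ i ∈ Finset.range m, |ww L s (b i) - ww L s (a i)| ^ P) ^ (1/P)
            ≤ (∑ i ∈ Finset.range m, (∑ ℓ ∈ Finset.range (m+1), g ℓ i) ^ P) ^ (1/P) := by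
          apply Real.rpow_le_rpow
          · exact Finset.sum_nonneg fun i _ => Real.rpow_nonneg (abs_nonneg _) _
          · apply Finset.sum_le_sum
            intro i hi
            exact Real.rpow_le_rpow (abs_nonneg _) (key i hi) hPpos.le
          · exact (div_pos one_pos hPpos).le
        have step2 := lp_sum_le m P hP (Finset.range (m+1)) g hg
        have step3 : ∑ ℓ ∈ Finset.range (m+1), (∑ i ∈ Finset.range m, g ℓ i ^ P) ^ (1/P)
            ≤ (∑ ℓ ∈ Finset.range m, 2 * hh ℓ) + 1 := by
          rw [Finset.sum_range_succ]
          apply add_le_add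
          · apply Finset.sum_le_sum
            intro ℓ hl
            have e2 : ∑ i ∈ Finset.range m, g ℓ i ^ P
                = ∑ i ∈ Finset.range m, |BB L s ℓ (b i) - BB L s ℓ (a i)| ^ P := by
              apply Finset.sum_congr rfl
              intro i _
              rw [hgdef]
              dsimp only
              rw [if_pos (Finset.mem_range.mp hl)]
            rw [e2]
            apply block_bound hLa a b hno hlen hP
            intro hsn
            have c1 : ((L ℓ : ℝ) + 1) ≤ P := le_trans (hsspec ℓ) (hpmono hsn)
            have c2 : (2:ℝ) ^ ((L ℓ : ℝ) + 1) ≤ (2:ℝ) ^ P :=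
              Real.rpow_le_rpow_of_exponent_le one_le_two c1
            have c3 : (2:ℝ) ^ ((L ℓ : ℝ) + 1) = ((2:ℕ) ^ (L ℓ + 1) : ℕ) := by
              rw [show ((L ℓ : ℝ) + 1) = ((L ℓ + 1 : ℕ) : ℝ) by push_cast; ring,
                Real.rpow_natCast]
              push_cast
              ring
            have c4 : 2 * L ℓ ≤ 2 ^ (L ℓ + 1) := by
              have := Nat.lt_two_pow_self (n := L ℓ)
              rw [pow_succ]
              omega
            have c5 : 2 * (L ℓ : ℝ) ≤ ((2:ℕ) ^ (L ℓ + 1) : ℕ) := by exact_mod_cast c4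
            linarith [c3 ▸ c2]
          · have e3 : ∑ i ∈ Finset.range m, g m i ^ P
                = (m : ℝ) * (2 * hh m) ^ P := by
              have : ∀ i ∈ Finset.range m, g m i ^ P = (2 * hh m) ^ P := by
                intro i _
                rw [hgdef]
                dsimp only
                rw [if_neg (lt_irrefl m)]
              rw [Finset.sum_congr rfl this, Finset.sum_const, Finset.card_range, nsmul_eq_mul]
            rw [e3]
            apply Real.rpow_le_one _ (tail_term_le hP) (div_pos one_pos hPpos).le
            exact mul_nonneg (Nat.cast_nonneg m) (Real.rpow_nonneg (by linarith [hh_pos m]) _)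
        calc (∑ i ∈ Finset.range m, |ww L s (b i) - ww L s (a i)| ^ P) ^ (1/P)
            ≤ (∑ i ∈ Finset.range m, (∑ ℓ ∈ Finset.range (m+1), g ℓ i) ^ P) ^ (1/P) := step1
          _ ≤ ∑ ℓ ∈ Finset.range (m+1), (∑ i ∈ Finset.range m, g ℓ i ^ P) ^ (1/P) := step2
          _ ≤ (∑ ℓ ∈ Finset.range m, 2 * hh ℓ) + 1 := step3
          _ ≤ 1 + 1 := by linarith [sum_two_hh_le m]
          _ = 2 := by norm_num
      exact main
    · -- BVSharpV2
      intro n m a b x hno hlen hx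
      have hP0 : (1:ℝ)/p n ≠ 0 := by
        have hpn : 0 < p n := lt_of_lt_of_le one_pos (hp1 n)
        exact one_div_ne_zero (ne_of_gt hpn)
      have hz : ∀ i ∈ Finset.range m,
          |(fun x _ => ww L s x) (x i) (b i) - (fun x _ => ww L s x) (x i) (a i)| ^ p n = 0 := by
        intro i _
        simp only [sub_self, abs_zero]
        exact Real.zero_rpow (by linarith [hp1 n])
      rw [Finset.sum_eq_zero hz, Real.zero_rpow hP0]
      norm_num
  · -- not in LamSharpBV
    rintro ⟨M, hV1, -⟩
    set ℓ := ⌈M⌉₊ with hldef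
    set aa : ℕ → ℝ := fun i => cc L s ℓ i - dd L s ℓ with haa
    set bb : ℕ → ℝ := fun i => cc L s ℓ i with hbb
    have hdp := dd_pos L s (hLa ℓ)
    have hq := qq_pos ℓ
    have hno : Nonoverlap (L ℓ) aa bb := by
      constructor
      · intro i hi
        have hlb := cc_lb L s (hLa ℓ) hi
        have hub := cc_ub L s (hLa ℓ) hi
        have hrh := region_half s ℓ
        refine ⟨by rw [haa]; dsimp only; linarith, by rw [haa, hbb]; dsimp only; linarith,
          by rw [hbb]; dsimp only; linarith⟩
      · intro i hi j hj hne
        rw [Set.eq_empty_iff_forall_notMem]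
        rintro x ⟨hx1, hx2⟩
        rw [haa, hbb] at hx1 hx2
        simp only [Set.mem_Ioo] at hx1 hx2
        have hsep := cc_sep L s (hLa ℓ) hi hj hne
        have d1 : |x - cc L s ℓ i| < dd L s ℓ := by
          rw [abs_lt]
          constructor <;> linarith [hx1.1, hx1.2]
        have d2 : |x - cc L s ℓ j| < dd L s ℓ := by
          rw [abs_lt]
          constructor <;> linarith [hx2.1, hx2.2]
        have : |cc L s ℓ i - cc L s ℓ j| < 2 * dd L s ℓ := by
          calc |cc L s ℓ i - cc L s ℓ j|
              = |(cc L s ℓ i - x) + (x - cc L s ℓ j)| := by ring_nf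
            _ ≤ |cc L s ℓ i - x| + |x - cc L s ℓ j| := abs_add_le _ _
            _ = |x - cc L s ℓ i| + |x - cc L s ℓ j| := by rw [abs_sub_comm]
            _ < 2 * dd L s ℓ := by linarith
        linarith
    have hy : ∀ i < L ℓ, (fun _ : ℕ => (0:ℝ)) i ∈ Set.Icc (0:ℝ) 1 := by
      intro i _
      exact ⟨le_refl 0, zero_le_one⟩
    have happ := hV1 (L ℓ) aa bb (fun _ => 0) hno hy
    have hsum : ∑ i ∈ Finset.range (L ℓ),
        |(fun x _ => ww L s x) (bb i) 0 - (fun x _ => ww L s x) (aa i) 0| / lam i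
        = hh ℓ * ∑ i ∈ Finset.range (L ℓ), 1/lam i := by
      rw [Finset.mul_sum]
      apply Finset.sum_congr rfl
      intro i hi
      have him := Finset.mem_range.mp hi
      show |ww L s (bb i) - ww L s (aa i)| / lam i = hh ℓ * (1/lam i)
      rw [hbb, haa]
      dsimp only
      rw [ww_peak hLa him, ww_foot hLa him, sub_zero, abs_of_nonneg (hh_pos ℓ).le, mul_one_div]
    have hbig : (ℓ:ℝ) + 1 ≤ hh ℓ * ∑ i ∈ Finset.range (L ℓ), 1/lam i := by
      have h1 := hLspec ℓ
      have h2 : hh ℓ * (((ℓ:ℝ)+1)/hh ℓ) ≤ hh ℓ * ∑ i ∈ Finset.range (L ℓ), 1/lam i :=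
        mul_le_mul_of_nonneg_left h1 (hh_pos ℓ).le
      have h3 : hh ℓ * (((ℓ:ℝ)+1)/hh ℓ) = (ℓ:ℝ)+1 :=
        mul_div_cancel₀ _ (ne_of_gt (hh_pos ℓ))
      linarith [h3 ▸ h2]
    have hceil : M ≤ (ℓ:ℝ) := by
      rw [hldef]
      exact Nat.le_ceil M
    rw [hsum] at happ
    linarith
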